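/- There exist a scalar product space (V,g) and a quasi-Clifford algebraic curvature tensor R on (V,g) such that R is not Jacobi-dual: there are vectors X, Y ∈ V with ε_X ≠ 0 such that Y is an eigenvector of 𝒥_X but X is not an eigenvector of 𝒥_Y. -/

import Mathlib

open Module Finset

/-- The algebraic curvature tensor `R⁰` of constant sectional curvature one. -/
def R0 {V : Type*} [AddCommGroup V] [Module ℝ V] (g : LinearMap.BilinForm ℝ V)
    (X Y Z W : V) : ℝ :=
  g Y Z * g X W - g X Z * g Y W

/-- The algebraic curvature tensor `R^J` generated by a `g`-skew-adjoint endomorphism `J`. -/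
def RJ {V : Type*} [AddCommGroup V] [Module ℝ V] (g : LinearMap.BilinForm ℝ V)
    (J : V →ₗ[ℝ] V) (X Y Z W : V) : ℝ :=
  g (J X) Z * g (J Y) W - g (J Y) Z * g (J X) W + 2 * g (J X) Y * g (J Z) W

noncomputable section QCaux

abbrev V6 : Type := Fin 6 → ℝ

def dv : Fin 6 → ℝ := ![1,1,1,-1,-1,-1]

def gg : LinearMap.BilinForm ℝ V6 :=
  LinearMap.mk₂ ℝ (fun x y => ∑ i, dv i * x i * y i)
    (fun x x' y => by simp [add_mul, mul_add, Finset.sum_add_distrib])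
    (fun a x y => by simp [Finset.mul_sum]; exact Finset.sum_congr rfl fun i _ => by ring)
    (fun x y y' => by simp [mul_add, Finset.sum_add_distrib])
    (fun a x y => by simp [Finset.mul_sum]; exact Finset.sum_congr rfl fun i _ => by ring)

lemma gg_apply (x y : V6) : gg x y = ∑ i, dv i * x i * y i := rfl

def uu : V6 := ![1,0,0,1,0,0]
def vv : V6 := ![0,1,0,0,1,0]
def nn : V6 := ![0,0,1,0,0,1]
def Xv : V6 := ![1,1,0,0,0,0]
def Yv : V6 := ![0,0,1,0,0,0]

@[simp] lemma dv_0 : dv 0 = (1 : ℝ) := rfl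
@[simp] lemma dv_1 : dv 1 = (1 : ℝ) := rfl
@[simp] lemma dv_2 : dv 2 = (1 : ℝ) := rfl
@[simp] lemma dv_3 : dv 3 = (-1 : ℝ) := rfl
@[simp] lemma dv_4 : dv 4 = (-1 : ℝ) := rfl
@[simp] lemma dv_5 : dv 5 = (-1 : ℝ) := rfl
@[simp] lemma uu_0 : uu 0 = (1 : ℝ) := rfl
@[simp] lemma uu_1 : uu 1 = (0 : ℝ) := rfl
@[simp] lemma uu_2 : uu 2 = (0 : ℝ) := rfl
@[simp] lemma uu_3 : uu 3 = (1 : ℝ) := rfl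
@[simp] lemma uu_4 : uu 4 = (0 : ℝ) := rfl
@[simp] lemma uu_5 : uu 5 = (0 : ℝ) := rfl
@[simp] lemma vv_0 : vv 0 = (0 : ℝ) := rfl
@[simp] lemma vv_1 : vv 1 = (1 : ℝ) := rfl
@[simp] lemma vv_2 : vv 2 = (0 : ℝ) := rfl
@[simp] lemma vv_3 : vv 3 = (0 : ℝ) := rfl
@[simp] lemma vv_4 : vv 4 = (1 : ℝ) := rfl
@[simp] lemma vv_5 : vv 5 = (0 : ℝ) := rfl
@[simp] lemma nn_0 : nn 0 = (0 : ℝ) := rfl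
@[simp] lemma nn_1 : nn 1 = (0 : ℝ) := rfl
@[simp] lemma nn_2 : nn 2 = (1 : ℝ) := rfl
@[simp] lemma nn_3 : nn 3 = (0 : ℝ) := rfl
@[simp] lemma nn_4 : nn 4 = (0 : ℝ) := rfl
@[simp] lemma nn_5 : nn 5 = (1 : ℝ) := rfl
@[simp] lemma Xv_0 : Xv 0 = (1 : ℝ) := rfl
@[simp] lemma Xv_1 : Xv 1 = (1 : ℝ) := rfl
@[simp] lemma Xv_2 : Xv 2 = (0 : ℝ) := rfl
@[simp] lemma Xv_3 : Xv 3 = (0 : ℝ) := rfl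
@[simp] lemma Xv_4 : Xv 4 = (0 : ℝ) := rfl
@[simp] lemma Xv_5 : Xv 5 = (0 : ℝ) := rfl
@[simp] lemma Yv_0 : Yv 0 = (0 : ℝ) := rfl
@[simp] lemma Yv_1 : Yv 1 = (0 : ℝ) := rfl
@[simp] lemma Yv_2 : Yv 2 = (1 : ℝ) := rfl
@[simp] lemma Yv_3 : Yv 3 = (0 : ℝ) := rfl
@[simp] lemma Yv_4 : Yv 4 = (0 : ℝ) := rfl
@[simp] lemma Yv_5 : Yv 5 = (0 : ℝ) := rfl

lemma gg_expand (x y : V6) : gg x y = x 0 * y 0 + x 1 * y 1 + x 2 * y 2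
    - x 3 * y 3 - x 4 * y 4 - x 5 * y 5 := by
  rw [gg_apply, Fin.sum_univ_six, dv_0, dv_1, dv_2, dv_3, dv_4, dv_5]; ring

def JA : V6 →ₗ[ℝ] V6 := (gg.flip uu).smulRight nn - (gg.flip nn).smulRight uu
def JB : V6 →ₗ[ℝ] V6 := (gg.flip vv).smulRight nn - (gg.flip nn).smulRight vv

lemma JA_def (x : V6) : JA x = gg x uu • nn - gg x nn • uu := rfl
lemma JB_def (x : V6) : JB x = gg x vv • nn - gg x nn • vv := rfl

def mu : Fin 2 → ℝ := ![1,-1]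
def Jf : Fin 2 → (V6 →ₗ[ℝ] V6) := ![JA, JB]

@[simp] lemma Jf_0 : Jf 0 = JA := rfl
@[simp] lemma Jf_1 : Jf 1 = JB := rfl
@[simp] lemma mu_0 : mu 0 = (1:ℝ) := rfl
@[simp] lemma mu_1 : mu 1 = (-1:ℝ) := rfl

def Rt (X Y Z W : V6) : ℝ := (0:ℝ) * R0 gg X Y Z W + ∑ i, mu i * RJ gg (Jf i) X Y Z W

def Jac6 (X : V6) : V6 →ₗ[ℝ] V6 :=
  ∑ i, mu i • ((3:ℝ) • ((gg.flip X) ∘ₗ Jf i).smulRight (Jf i X) - (gg (Jf i X) X) • Jf i)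

lemma Jac6_apply (X Y : V6) :
    Jac6 X Y = ∑ i, mu i • ((3:ℝ) • ((gg (Jf i Y)) X • Jf i X) - gg (Jf i X) X • Jf i Y) := by
  simp only [Jac6, LinearMap.sum_apply, LinearMap.smul_apply, LinearMap.sub_apply,
    LinearMap.smulRight_apply, LinearMap.coe_comp, Function.comp_apply]
  rfl

lemma gg_JA (x y : V6) : gg (JA x) y = gg x uu * gg nn y - gg x nn * gg uu y := by
  rw [show gg (JA x) y = (gg (gg x uu • nn - gg x nn • uu)) y from rfl,
    map_sub, map_smul, map_smul]
  simp [smul_eq_mul]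

lemma gg_JB (x y : V6) : gg (JB x) y = gg x vv * gg nn y - gg x nn * gg vv y := by
  rw [show gg (JB x) y = (gg (gg x vv • nn - gg x nn • vv)) y from rfl,
    map_sub, map_smul, map_smul]
  simp [smul_eq_mul]

lemma gg_sym (x y : V6) : gg x y = gg y x := by rw [gg_expand, gg_expand]; ring

lemma gg_uu_uu : gg uu uu = 0 := by rw [gg_expand]; norm_num
lemma gg_uu_vv : gg uu vv = 0 := by rw [gg_expand]; norm_num
lemma gg_uu_nn : gg uu nn = 0 := by rw [gg_expand]; norm_num
lemma gg_vv_vv : gg vv vv = 0 := by rw [gg_expand]; norm_num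
lemma gg_vv_nn : gg vv nn = 0 := by rw [gg_expand]; norm_num
lemma gg_nn_nn : gg nn nn = 0 := by rw [gg_expand]; norm_num

lemma skewA (x y : V6) : gg (JA x) y = - gg x (JA y) := by
  rw [gg_JA, show gg x (JA y) = gg x (gg y uu • nn - gg y nn • uu) from rfl,
    map_sub, map_smul, map_smul]
  simp only [smul_eq_mul]
  rw [gg_sym x uu, gg_sym x nn, gg_sym y uu, gg_sym y nn]
  ring

lemma skewB (x y : V6) : gg (JB x) y = - gg x (JB y) := by
  rw [gg_JB, show gg x (JB y) = gg x (gg y vv • nn - gg y nn • vv) from rfl,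
    map_sub, map_smul, map_smul]
  simp only [smul_eq_mul]
  rw [gg_sym x vv, gg_sym x nn, gg_sym y vv, gg_sym y nn]
  ring

lemma JA_JA (x : V6) : JA (JA x) = 0 := by
  rw [show JA (JA x) = gg (JA x) uu • nn - gg (JA x) nn • uu from rfl, gg_JA, gg_JA,
    gg_uu_uu, gg_uu_nn, gg_nn_nn, gg_sym nn uu, gg_uu_nn]
  simp

lemma JB_JB (x : V6) : JB (JB x) = 0 := by
  rw [show JB (JB x) = gg (JB x) vv • nn - gg (JB x) nn • vv from rfl, gg_JB, gg_JB,
    gg_vv_vv, gg_vv_nn, gg_nn_nn, gg_sym nn vv, gg_vv_nn]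
  simp

lemma JA_JB (x : V6) : JA (JB x) = 0 := by
  rw [show JA (JB x) = gg (JB x) uu • nn - gg (JB x) nn • uu from rfl, gg_JB, gg_JB,
    gg_nn_nn, gg_sym nn uu, gg_uu_nn, gg_sym vv uu, gg_uu_vv, gg_vv_nn]
  simp

lemma JB_JA (x : V6) : JB (JA x) = 0 := by
  rw [show JB (JA x) = gg (JA x) vv • nn - gg (JA x) nn • vv from rfl, gg_JA, gg_JA,
    gg_nn_nn, gg_sym nn vv, gg_vv_nn, gg_uu_vv, gg_uu_nn]
  simp

lemma gg_Xv_Xv : gg Xv Xv = 2 := by rw [gg_expand]; norm_num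
lemma gg_Xv_uu : gg Xv uu = 1 := by rw [gg_expand]; norm_num
lemma gg_Xv_vv : gg Xv vv = 1 := by rw [gg_expand]; norm_num
lemma gg_Xv_nn : gg Xv nn = 0 := by rw [gg_expand]; norm_num
lemma gg_Yv_uu : gg Yv uu = 0 := by rw [gg_expand]; norm_num
lemma gg_Yv_vv : gg Yv vv = 0 := by rw [gg_expand]; norm_num
lemma gg_Yv_nn : gg Yv nn = 1 := by rw [gg_expand]; norm_num

lemma JA_Xv : JA Xv = nn := by rw [JA_def, gg_Xv_uu, gg_Xv_nn]; simp
lemma JB_Xv : JB Xv = nn := by rw [JB_def, gg_Xv_vv, gg_Xv_nn]; simp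
lemma JA_Yv : JA Yv = -uu := by rw [JA_def, gg_Yv_uu, gg_Yv_nn]; simp
lemma JB_Yv : JB Yv = -vv := by rw [JB_def, gg_Yv_vv, gg_Yv_nn]; simp

-- scalar products involving JA/JB values
lemma s1 : gg (JA Yv) Xv = -1 := by
  rw [JA_Yv, gg_sym, show gg Xv (-uu) = - gg Xv uu from map_neg _ _, gg_Xv_uu]
lemma s2 : gg (JB Yv) Xv = -1 := by
  rw [JB_Yv, gg_sym, show gg Xv (-vv) = - gg Xv vv from map_neg _ _, gg_Xv_vv]
lemma s3 : gg (JA Xv) Xv = 0 := by rw [JA_Xv, gg_sym, gg_Xv_nn]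
lemma s4 : gg (JB Xv) Xv = 0 := by rw [JB_Xv, gg_sym, gg_Xv_nn]
lemma s5 : gg (JA Xv) Yv = 1 := by rw [JA_Xv, gg_sym, gg_Yv_nn]
lemma s6 : gg (JB Xv) Yv = 1 := by rw [JB_Xv, gg_sym, gg_Yv_nn]
lemma s7 : gg (JA Yv) Yv = 0 := by
  rw [JA_Yv, gg_sym, show gg Yv (-uu) = - gg Yv uu from map_neg _ _, gg_Yv_uu]; simp
lemma s8 : gg (JB Yv) Yv = 0 := by
  rw [JB_Yv, gg_sym, show gg Yv (-vv) = - gg Yv vv from map_neg _ _, gg_Yv_vv]; simp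

lemma Jac6_Xv_Yv : Jac6 Xv Yv = 0 := by
  rw [Jac6_apply, Fin.sum_univ_two, Jf_0, Jf_1, mu_0, mu_1, s1, s2, s3, s4, JA_Xv, JB_Xv]
  simp only [neg_smul, one_smul, zero_smul, sub_zero, smul_neg]
  abel

lemma Jac6_Yv_Xv : Jac6 Yv Xv = (3:ℝ) • vv - (3:ℝ) • uu := by
  rw [Jac6_apply, Fin.sum_univ_two, Jf_0, Jf_1, mu_0, mu_1, s5, s6, s7, s8, JA_Yv, JB_Yv]
  simp only [neg_smul, one_smul, zero_smul, sub_zero, smul_neg, neg_neg]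
  abel

lemma hurwitz_all (i j : Fin 2) (x : V6) : Jf i (Jf j x) + Jf j (Jf i x) = 0 := by
  fin_cases i <;> fin_cases j
  · exact (by rw [JA_JA]; simp : JA (JA x) + JA (JA x) = 0)
  · exact (by rw [JA_JB, JB_JA]; simp : JA (JB x) + JB (JA x) = 0)
  · exact (by rw [JB_JA, JA_JB]; simp : JB (JA x) + JA (JB x) = 0)
  · exact (by rw [JB_JB]; simp : JB (JB x) + JB (JB x) = 0)

lemma skew_all (i : Fin 2) (x y : V6) : gg (Jf i x) y = - gg x (Jf i y) := by
  fin_cases i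
  · exact skewA x y
  · exact skewB x y

end QCaux

theorem exists_quasiClifford_not_jacobiDual :
    ∃ (V : Type) (_ : AddCommGroup V) (_ : Module ℝ V) (_ : FiniteDimensional ℝ V)
      (g : LinearMap.BilinForm ℝ V),
      (∀ x y, g x y = g y x) ∧ g.Nondegenerate ∧
      ∃ (m : ℕ) (μ₀ : ℝ) (μ c : Fin m → ℝ) (J : Fin m → V →ₗ[ℝ] V)
        (R : V → V → V → V → ℝ) (Jac : V → V →ₗ[ℝ] V),
        (∀ i, ∀ x y : V, g (J i x) y = - g x (J i y)) ∧
        (∀ i j, J i ∘ₗ J j + J j ∘ₗ J i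
          = ((if i = j then 2 * c i else 0 : ℝ) • LinearMap.id : V →ₗ[ℝ] V)) ∧
        (∀ X Y Z W, R X Y Z W = μ₀ * R0 g X Y Z W + ∑ i, μ i * RJ g (J i) X Y Z W) ∧
        (∀ X Y Z, g (Jac X Y) Z = R Y X X Z) ∧
        ∃ X Y : V, g X X ≠ 0 ∧
          (∃ lam : ℝ, Module.End.HasEigenvector (Jac X) lam Y) ∧
          ¬ ∃ lam : ℝ, Module.End.HasEigenvector (Jac Y) lam X := by
  refine ⟨V6, inferInstance, inferInstance, inferInstance, gg, gg_sym, ?_, 2, 0, mu,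
    (fun _ => 0), Jf, Rt, Jac6, skew_all, ?_, fun _ _ _ _ => rfl, ?_, Xv, Yv, ?_, ?_, ?_⟩
  · -- nondegenerate
    refine (LinearMap.IsRefl.nondegenerate_iff_separatingLeft
      (fun x y h => by rw [gg_sym]; exact h)).mpr ?_
    intro x hx
    funext i
    fin_cases i <;>
      [have := hx (Pi.single 0 1); have := hx (Pi.single 1 1); have := hx (Pi.single 2 1);
       have := hx (Pi.single 3 1); have := hx (Pi.single 4 1); have := hx (Pi.single 5 1)] <;>
      · rw [gg_expand] at this
        simp [Pi.single_apply] at this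
        simpa using this
  · -- Hurwitz
    intro i j
    have hscal : (if i = j then 2 * (0:ℝ) else 0) = 0 := by split <;> norm_num
    rw [hscal, zero_smul]
    apply LinearMap.ext
    intro x
    simpa only [LinearMap.add_apply, LinearMap.comp_apply, LinearMap.zero_apply]
      using hurwitz_all i j x
  · -- Jacobi operator identity
    intro X Y Z
    rw [Jac6_apply, Fin.sum_univ_two]
    simp only [map_add, map_sub, map_smul, LinearMap.add_apply, LinearMap.sub_apply,
      LinearMap.smul_apply, smul_eq_mul, Jf_0, Jf_1, mu_0, mu_1]
    simp only [Rt, RJ, R0, Fin.sum_univ_two, Jf_0, Jf_1, mu_0, mu_1]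
    ring
  · -- eps X ≠ 0
    rw [gg_Xv_Xv]; norm_num
  · -- Y eigenvector of Jac X
    refine ⟨0, Module.End.hasEigenvector_iff.mpr ⟨Module.End.mem_eigenspace_iff.mpr ?_, ?_⟩⟩
    · rw [show (Jac6 Xv) Yv = Jac6 Xv Yv from rfl, Jac6_Xv_Yv, zero_smul]
    · intro h
      have h2 := congrFun h 2
      rw [Yv_2] at h2
      norm_num at h2
  · -- X not eigenvector of Jac Y
    rintro ⟨lam, h⟩
    have h2 : Jac6 Yv Xv = lam • Xv := Module.End.mem_eigenspace_iff.mp h.1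
    have h3 := congrFun (h2.symm.trans Jac6_Yv_Xv) 3
    simp only [Pi.smul_apply, Pi.sub_apply, smul_eq_mul, Xv_3, vv_3, uu_3] at h3
    norm_num at h3
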